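/- Let $1\le p<\infty$, $0\le\lambda_1,\lambda_2<n$, $0<\lambda_1+\lambda_2<n$, $\varphi(B)=r_B^{\lambda_1}w(B)^{\lambda_2/n}$. If $w\in A(\mathcal M^{p}(\varphi))$, then $w$ satisfies the reverse doubling condition with exponent $\lambda_1/(n-\lambda_2)$: for all balls $B_1\subset B_2$, $w(B_1)/w(B_2)\le C(|B_1|/|B_2|)^{\lambda_1/(n-\lambda_2)}$, with $C$ depending only on $[w]_{A(\mathcal M^{p}(\varphi))}$, $n$, $p$, $\lambda_1$, $\lambda_2$. -/

import Mathlib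

open MeasureTheory Metric ENNReal Set

noncomputable section

abbrev En (n : ℕ) := EuclideanSpace ℝ (Fin n)

/-- Weighted Morrey "norm": sup over all balls of `((φ(B))⁻¹ ∫_B f^p w)^{1/p}`. -/
def morreyNorm (n : ℕ) (p : ℝ) (φ : En n → ℝ → ℝ≥0∞) (w f : En n → ℝ≥0∞) : ℝ≥0∞ :=
  ⨆ (c : En n) (r : ℝ) (_ : 0 < r),
    ((∫⁻ x in ball c r, f x ^ p * w x) / φ c r) ^ (1 / p)

/-- Köthe dual norm of the weighted Morrey space. -/
def kotheNorm (n : ℕ) (p : ℝ) (φ : En n → ℝ → ℝ≥0∞) (w g : En n → ℝ≥0∞) : ℝ≥0∞ :=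
  ⨆ (f : En n → ℝ≥0∞) (_ : morreyNorm n p φ w f ≤ 1), ∫⁻ x, f x * g x

/-- Characteristic function of the ball `B(c,r)`, with values in `ℝ≥0∞`. -/
def chiB {n : ℕ} (c : En n) (r : ℝ) : En n → ℝ≥0∞ := (ball c r).indicator 1

/-- The Morrey parameter function `φ(B) = r_B^{λ₁} w(B)^{λ₂/n}`. -/
def phiKS (n : ℕ) (lam₁ lam₂ : ℝ) (w : En n → ℝ≥0∞) : En n → ℝ → ℝ≥0∞ :=
  fun c r => ENNReal.ofReal (r ^ lam₁) * (∫⁻ x in ball c r, w x) ^ (lam₂ / (n : ℝ))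

/-- The Muckenhoupt–Morrey constant `[w]_{A(M^p(φ))}`. -/
def apConst (n : ℕ) (p : ℝ) (φ : En n → ℝ → ℝ≥0∞) (w : En n → ℝ≥0∞) : ℝ≥0∞ :=
  ⨆ (c : En n) (r : ℝ) (_ : 0 < r),
    morreyNorm n p φ w (chiB c r) * kotheNorm n p φ w (chiB c r) / volume (ball c r)

lemma powAux {α : Type*} [MeasurableSpace α] (μ : Measure α) {w : α → ℝ≥0∞}
    (hw : Measurable w) {a : ℝ} (ha : 0 ≤ a) (ha1 : a ≤ 1) :
    ∫⁻ x, w x ^ a ∂μ ≤ (∫⁻ x, w x ∂μ) ^ a * (μ Set.univ) ^ (1 - a) := by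
  rcases ha.eq_or_lt with h0 | h0
  · simp [← h0, lintegral_one]
  rcases ha1.eq_or_lt with h1 | h1
  · simp [h1]
  have hpq : (1/a).HolderConjugate (1/(1-a)) :=
    Real.holderConjugate_one_div h0 (by linarith) (by ring)
  have H := ENNReal.lintegral_mul_le_Lp_mul_Lq μ hpq
      (f := fun x => w x ^ a) (g := fun _ => 1)
      (hw.pow_const a).aemeasurable aemeasurable_const
  simp only [Pi.mul_apply, mul_one] at H
  calc ∫⁻ x, w x ^ a ∂μ
      ≤ (∫⁻ x, (w x ^ a) ^ (1/a) ∂μ) ^ (1 / (1/a)) *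
        (∫⁻ _x, (1:ℝ≥0∞) ^ (1/(1-a)) ∂μ) ^ (1 / (1/(1-a))) := H
    _ = (∫⁻ x, w x ∂μ) ^ a * (μ Set.univ) ^ (1 - a) := by
        simp_rw [← ENNReal.rpow_mul, mul_one_div_cancel h0.ne', ENNReal.rpow_one,
          one_div_one_div, ENNReal.one_rpow, lintegral_one]

lemma revAux {α : Type*} [MeasurableSpace α] (μ : Measure α) {w : α → ℝ≥0∞}
    (hw : Measurable w) (hfin : ∀ᵐ x ∂μ, w x ≠ ⊤) (hpos : ∀ᵐ x ∂μ, w x ≠ 0)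
    {ε : ℝ} (hε : 0 < ε) :
    μ Set.univ ≤ (∫⁻ x, w x ∂μ) ^ (ε/(1+ε)) * (∫⁻ x, w x ^ (-ε) ∂μ) ^ (1/(1+ε)) := by
  have h1ε : (0:ℝ) < 1 + ε := by linarith
  have hpq : ((1+ε)/ε).HolderConjugate (1+ε) := by
    refine Real.holderConjugate_iff.mpr ⟨?_, ?_⟩
    · rw [lt_div_iff₀ hε]; linarith
    · field_simp <;> ring
  have H := ENNReal.lintegral_mul_le_Lp_mul_Lq μ hpq
      (f := fun x => w x ^ (ε/(1+ε))) (g := fun x => w x ^ (-(ε/(1+ε))))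
      (hw.pow_const _).aemeasurable (hw.pow_const _).aemeasurable
  have hfg : ∫⁻ x, ((fun x => w x ^ (ε/(1+ε))) * fun x => w x ^ (-(ε/(1+ε)))) x ∂μ
      = μ Set.univ := by
    rw [← lintegral_one]
    apply lintegral_congr_ae
    filter_upwards [hfin, hpos] with x hx hx0
    simp only [Pi.mul_apply]
    rw [← ENNReal.rpow_add _ _ hx0 hx, add_neg_cancel, ENNReal.rpow_zero]
  rw [hfg] at H
  calc μ Set.univ ≤ (∫⁻ x, (w x ^ (ε/(1+ε))) ^ ((1+ε)/ε) ∂μ) ^ (1 / ((1+ε)/ε)) *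
        (∫⁻ x, (w x ^ (-(ε/(1+ε)))) ^ (1+ε) ∂μ) ^ (1 / (1+ε)) := H
    _ = (∫⁻ x, w x ∂μ) ^ (ε/(1+ε)) * (∫⁻ x, w x ^ (-ε) ∂μ) ^ (1/(1+ε)) := by
        rw [one_div_div]
        congr 2
        · apply lintegral_congr; intro x
          rw [← ENNReal.rpow_mul]
          congr 1
          field_simp; exact ENNReal.rpow_one _
        · apply lintegral_congr; intro x
          rw [← ENNReal.rpow_mul]
          congr 1
          field_simp

lemma rpow_ne_top'' {x : ℝ≥0∞} (h0 : x ≠ 0) (ht : x ≠ ⊤) (y : ℝ) : x ^ y ≠ ⊤ := by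
  lift x to NNReal using ht
  rw [← ENNReal.coe_rpow_of_ne_zero (by exact_mod_cast h0)]
  exact ENNReal.coe_ne_top

lemma mul_self_rpow_le (x : ℝ≥0∞) {t : ℝ} (ht : t < 0) (h1t : 0 < 1 + t) :
    x ^ t * x ≤ x ^ (1+t) := by
  rcases eq_or_ne x 0 with rfl | hx0
  · simp [ENNReal.zero_rpow_of_neg ht, ENNReal.zero_rpow_of_pos h1t]
  rcases eq_or_ne x ⊤ with rfl | hxt
  · simp [ENNReal.top_rpow_of_neg ht]
  · rw [add_comm, ENNReal.rpow_add t 1 hx0 hxt, ENNReal.rpow_one]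

set_option maxHeartbeats 1000000 in
theorem stmt15 {n : ℕ} (p lam₁ lam₂ : ℝ) (hp : 1 ≤ p)
    (h1 : 0 ≤ lam₁) (h1' : lam₁ < n) (h2 : 0 ≤ lam₂) (h2' : lam₂ < n)
    (hsum0 : 0 < lam₁ + lam₂) (hsum : lam₁ + lam₂ < n) :
    ∀ A : ℝ≥0∞, A ≠ ⊤ → ∃ C : ℝ≥0∞, C ≠ ⊤ ∧
      ∀ w : En n → ℝ≥0∞, Measurable w →
        apConst n p (phiKS n lam₁ lam₂ w) w ≤ A →
        ∀ (c₁ : En n) (r₁ : ℝ) (c₂ : En n) (r₂ : ℝ), 0 < r₁ → 0 < r₂ →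
          ball c₁ r₁ ⊆ ball c₂ r₂ →
          (∫⁻ x in ball c₁ r₁, w x) ≤ C * (∫⁻ x in ball c₂ r₂, w x) *
            (volume (ball c₁ r₁) / volume (ball c₂ r₂)) ^ (lam₁ / ((n : ℝ) - lam₂)) := by
  intro A hA
  have hn0 : (0:ℝ) < n := lt_of_le_of_lt h1 h1'
  have hp0 : (0:ℝ) < p := lt_of_lt_of_le one_pos hp
  have hnl2 : (0:ℝ) < (n:ℝ) - lam₂ := by linarith
  have hA'0 : A + 1 ≠ 0 := by simp
  have hA't : A + 1 ≠ ⊤ := by simp [hA]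
  refine ⟨(A+1) ^ (p * n / ((n:ℝ) - lam₂)), ?_, ?_⟩
  · exact ENNReal.rpow_ne_top_of_nonneg (by positivity) hA't
  have hC1 : (1:ℝ≥0∞) ≤ (A+1) ^ (p * n / ((n:ℝ) - lam₂)) :=
    calc (1:ℝ≥0∞) = (1:ℝ≥0∞) ^ (p * n / ((n:ℝ) - lam₂)) := (ENNReal.one_rpow _).symm
      _ ≤ (A+1) ^ (p * n / ((n:ℝ) - lam₂)) := ENNReal.rpow_le_rpow le_add_self (by positivity)
  intro w hw hAp c₁ r₁ c₂ r₂ hr₁ hr₂ hsub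
  set W₁ := ∫⁻ x in ball c₁ r₁, w x with hW₁def
  set W₂ := ∫⁻ x in ball c₂ r₂, w x with hW₂def
  set V₁ := volume (ball c₁ r₁) with hV₁def
  set V₂ := volume (ball c₂ r₂) with hV₂def
  set v := volume (ball (0 : En n) 1) with hvdef
  have hmono : W₁ ≤ W₂ := lintegral_mono' (Measure.restrict_mono hsub le_rfl) le_rfl
  have hV₁0 : V₁ ≠ 0 := (measure_ball_pos volume c₁ hr₁).ne'
  have hV₂0 : V₂ ≠ 0 := (measure_ball_pos volume c₂ hr₂).ne'
  have hV₁t : V₁ ≠ ⊤ := measure_ball_lt_top.ne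
  have hV₂t : V₂ ≠ ⊤ := measure_ball_lt_top.ne
  have hv0 : v ≠ 0 := (measure_ball_pos volume _ one_pos).ne'
  have hvt : v ≠ ⊤ := measure_ball_lt_top.ne
  have hX0 : (V₁ / V₂) ^ (lam₁ / ((n:ℝ) - lam₂)) ≠ 0 := by
    refine (ENNReal.rpow_pos ?_ ?_).ne'
    · exact ENNReal.div_pos hV₁0 hV₂t
    · exact (ENNReal.div_lt_top hV₁t hV₂0).ne
  rcases h1.eq_or_lt with hl10 | hl1pos
  · -- lam₁ = 0 : trivial by monotonicity
    rw [← hl10, zero_div, ENNReal.rpow_zero, mul_one]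
    calc W₁ ≤ W₂ := hmono
      _ = 1 * W₂ := (one_mul _).symm
      _ ≤ (A+1) ^ (p * n / ((n:ℝ) - lam₂)) * W₂ := mul_le_mul_left hC1 _
  by_cases hW₁0 : W₁ = 0
  · exact le_trans (le_of_eq hW₁0) zero_le
  by_cases hW₂t : W₂ = ⊤
  · rw [hW₂t, ENNReal.mul_top (zero_lt_one.trans_le hC1).ne', ENNReal.top_mul hX0]
    exact le_top
  have hW₂0 : W₂ ≠ 0 := fun h => hW₁0 (le_antisymm (h ▸ hmono) zero_le)
  have hW₁t : W₁ ≠ ⊤ := (lt_of_le_of_lt hmono (lt_top_iff_ne_top.mpr hW₂t)).ne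
  have hW₁pos : 0 < W₁ := pos_iff_ne_zero.mpr hW₁0
  have hW₂pos : 0 < W₂ := pos_iff_ne_zero.mpr hW₂0
  -- exponents
  set ε : ℝ := lam₁ / (p * n) with hεdef
  have hε : 0 < ε := by positivity
  set s : ℝ := ((n:ℝ) - lam₂) / n with hsdef
  have hs0 : 0 < s := by positivity
  set b : ℝ := ((n:ℝ) - lam₁ - lam₂) / n with hbdef
  have hb0 : 0 < b := div_pos (by linarith) hn0
  set a : ℝ := 1 - lam₁ / n with hadef
  have ha0 : 0 < a := by
    rw [hadef]; rw [sub_pos, div_lt_one hn0]; exact h1'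
  have ha1 : a ≤ 1 := by rw [hadef]; nlinarith [div_nonneg h1 hn0.le]
  set R₁ := ENNReal.ofReal (r₁ ^ lam₁) with hR₁def
  have hR₁0 : R₁ ≠ 0 := by
    rw [hR₁def]; simp only [ne_eq, ENNReal.ofReal_eq_zero, not_le]
    exact Real.rpow_pos_of_pos hr₁ _
  have hR₁t : R₁ ≠ ⊤ := ENNReal.ofReal_ne_top
  set N₀ := W₂ ^ (b/p) * v ^ (lam₁/((n:ℝ)*p)) with hN₀def
  have hN₀0 : N₀ ≠ 0 := by
    rw [hN₀def]
    exact mul_ne_zero (ENNReal.rpow_pos hW₂pos hW₂t).ne' (ENNReal.rpow_pos (pos_iff_ne_zero.mpr hv0) hvt).ne'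
  have hN₀t : N₀ ≠ ⊤ := by
    rw [hN₀def]
    exact mul_ne_top (rpow_ne_top'' hW₂0 hW₂t _) (rpow_ne_top'' hv0 hvt _)
  -- volume of balls
  have hVpow : ∀ (c' : En n) (r' : ℝ), 0 < r' →
      volume (ball c' r') ^ (lam₁/(n:ℝ)) = ENNReal.ofReal (r' ^ lam₁) * v ^ (lam₁/(n:ℝ)) := by
    intro c' r' hr'
    rw [hvdef, Measure.addHaar_ball_of_pos volume c' hr',
      ENNReal.mul_rpow_of_nonneg _ _ (by positivity)]
    congr 1
    rw [finrank_euclideanSpace_fin, ← Real.rpow_natCast r' n,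
      ENNReal.ofReal_rpow_of_pos (Real.rpow_pos_of_pos hr' _), ← Real.rpow_mul hr'.le]
    congr 1
    field_simp
  -- the key Hölder estimate for the test function
  have key3 : ∀ (c' : En n) (r' : ℝ), 0 < r' →
      (∫⁻ x in ball c' r', (chiB c₂ r₂ x * w x ^ (-ε)) ^ p * w x)
        ≤ (W₂ ^ b * v ^ (lam₁/(n:ℝ))) * phiKS n lam₁ lam₂ w c' r' := by
    intro c' r' hr'
    have hab : a = b + lam₂/(n:ℝ) := by rw [hadef, hbdef]; field_simp; ring
    have h1a : 1 - a = lam₁/(n:ℝ) := by rw [hadef]; ring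
    have pt : ∀ x, (chiB c₂ r₂ x * w x ^ (-ε)) ^ p * w x
        ≤ (ball c₂ r₂).indicator (fun x => w x ^ a) x := by
      intro x
      by_cases hx : x ∈ ball c₂ r₂
      · rw [indicator_of_mem hx]
        have hchi : chiB c₂ r₂ x = 1 := by simp [chiB, indicator_of_mem hx]
        rw [hchi, one_mul, ← ENNReal.rpow_mul]
        have hεp : -ε * p = -(lam₁/(n:ℝ)) := by rw [hεdef]; field_simp <;> ring
        have haeq : a = 1 + -(lam₁/(n:ℝ)) := by rw [hadef]; ring
        rw [hεp, haeq]
        exact mul_self_rpow_le (w x) (neg_neg_of_pos (div_pos hl1pos hn0)) (haeq ▸ ha0)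
      · rw [indicator_of_notMem hx]
        have hchi : chiB c₂ r₂ x = 0 := by simp [chiB, indicator_of_notMem hx]
        rw [hchi, zero_mul, ENNReal.zero_rpow_of_pos hp0, zero_mul]
    calc ∫⁻ x in ball c' r', (chiB c₂ r₂ x * w x ^ (-ε)) ^ p * w x
        ≤ ∫⁻ x in ball c' r', (ball c₂ r₂).indicator (fun x => w x ^ a) x :=
          lintegral_mono pt
      _ = ∫⁻ x in ball c₂ r₂ ∩ ball c' r', w x ^ a := by
          rw [lintegral_indicator measurableSet_ball, Measure.restrict_restrict measurableSet_ball]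
      _ ≤ (∫⁻ x in ball c₂ r₂ ∩ ball c' r', w x) ^ a *
          ((volume.restrict (ball c₂ r₂ ∩ ball c' r')) Set.univ) ^ (1-a) :=
          powAux _ hw ha0.le ha1
      _ = (∫⁻ x in ball c₂ r₂ ∩ ball c' r', w x) ^ b *
          (∫⁻ x in ball c₂ r₂ ∩ ball c' r', w x) ^ (lam₂/(n:ℝ)) *
          (volume (ball c₂ r₂ ∩ ball c' r')) ^ (lam₁/(n:ℝ)) := by
          rw [Measure.restrict_apply_univ, h1a, hab,
            ENNReal.rpow_add_of_nonneg _ _ hb0.le (by positivity)]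
      _ ≤ W₂ ^ b * (∫⁻ x in ball c' r', w x) ^ (lam₂/(n:ℝ)) *
          (volume (ball c' r')) ^ (lam₁/(n:ℝ)) := by
          gcongr
          · exact lintegral_mono' (Measure.restrict_mono inter_subset_left le_rfl) le_rfl
          · exact inter_subset_right
          · exact inter_subset_right
      _ = (W₂ ^ b * v ^ (lam₁/(n:ℝ))) * phiKS n lam₁ lam₂ w c' r' := by
          rw [hVpow c' r' hr', phiKS]; ring
  -- the test function
  set f : En n → ℝ≥0∞ := fun x => N₀⁻¹ * (chiB c₂ r₂ x * w x ^ (-ε)) with hfdef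
  have hf₀meas : Measurable fun x => chiB c₂ r₂ x * w x ^ (-ε) := by
    unfold chiB
    exact (measurable_one.indicator measurableSet_ball).mul (hw.pow_const _)
  have hmor : morreyNorm n p (phiKS n lam₁ lam₂ w) w f ≤ 1 := by
    rw [morreyNorm]
    apply iSup_le; intro c'; apply iSup_le; intro r'; apply iSup_le; intro hr'
    have hint : (∫⁻ x in ball c' r', f x ^ p * w x)
        = N₀⁻¹ ^ p * ∫⁻ x in ball c' r', (chiB c₂ r₂ x * w x ^ (-ε)) ^ p * w x := by
      rw [← lintegral_const_mul (f := fun x => (chiB c₂ r₂ x * w x ^ (-ε)) ^ p * w x) _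
        ((hf₀meas.pow_const p).mul hw)]
      apply lintegral_congr; intro x
      rw [hfdef]
      simp only
      rw [ENNReal.mul_rpow_of_nonneg _ _ hp0.le, mul_assoc]
    rw [hint, mul_div_assoc]
    have h2 : (∫⁻ x in ball c' r', (chiB c₂ r₂ x * w x ^ (-ε)) ^ p * w x) /
        phiKS n lam₁ lam₂ w c' r' ≤ W₂ ^ b * v ^ (lam₁/(n:ℝ)) :=
      ENNReal.div_le_of_le_mul (key3 c' r' hr')
    calc (N₀⁻¹ ^ p * ((∫⁻ x in ball c' r', (chiB c₂ r₂ x * w x ^ (-ε)) ^ p * w x) /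
            phiKS n lam₁ lam₂ w c' r')) ^ (1/p)
        ≤ (N₀⁻¹ ^ p * (W₂ ^ b * v ^ (lam₁/(n:ℝ)))) ^ (1/p) :=
          ENNReal.rpow_le_rpow (mul_le_mul_right h2 _) (by positivity)
      _ = 1 := by
          rw [ENNReal.mul_rpow_of_nonneg _ _ (by positivity),
            ENNReal.mul_rpow_of_nonneg _ _ (by positivity),
            ← ENNReal.rpow_mul, ← ENNReal.rpow_mul, ← ENNReal.rpow_mul,
            mul_one_div_cancel hp0.ne', ENNReal.rpow_one,
            show b * (1/p) = b/p by ring,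
            show (lam₁/(n:ℝ)) * (1/p) = lam₁/((n:ℝ)*p) by field_simp <;> ring,
            ← hN₀def]
          exact ENNReal.inv_mul_cancel hN₀0 hN₀t
  -- lower bound for the Morrey norm of chiB c₂ r₂
  have hMlow : ((W₁ / phiKS n lam₁ lam₂ w c₁ r₁) ^ (1/p))
      ≤ morreyNorm n p (phiKS n lam₁ lam₂ w) w (chiB c₂ r₂) := by
    rw [morreyNorm]
    have hint : (∫⁻ x in ball c₁ r₁, chiB c₂ r₂ x ^ p * w x) = W₁ := by
      rw [hW₁def]
      apply setLIntegral_congr_fun measurableSet_ball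
      exact fun x hx => by
        simp [chiB, indicator_of_mem (hsub hx), ENNReal.one_rpow]
    exact le_iSup_of_le c₁ (le_iSup_of_le r₁ (le_iSup_of_le hr₁ (by rw [hint])))
  -- lower bound for the Köthe norm of chiB c₂ r₂
  set L : ℝ≥0∞ := ∫⁻ x in ball c₂ r₂, w x ^ (-ε) with hLdef
  have hKlow : N₀⁻¹ * L ≤ kotheNorm n p (phiKS n lam₁ lam₂ w) w (chiB c₂ r₂) := by
    rw [kotheNorm]
    refine le_iSup_of_le f (le_iSup_of_le hmor (le_of_eq ?_))
    rw [hLdef, ← lintegral_indicator measurableSet_ball,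
      ← lintegral_const_mul _ ((hw.pow_const (-ε)).indicator measurableSet_ball)]
    apply lintegral_congr; intro x
    by_cases hx : x ∈ ball c₂ r₂
    · simp [hfdef, chiB, indicator_of_mem hx]
    · simp [hfdef, chiB, indicator_of_notMem hx]
  -- the A_p condition at the ball B₂
  have hMK : morreyNorm n p (phiKS n lam₁ lam₂ w) w (chiB c₂ r₂) *
      kotheNorm n p (phiKS n lam₁ lam₂ w) w (chiB c₂ r₂) ≤ (A+1) * V₂ := by
    have hterm : morreyNorm n p (phiKS n lam₁ lam₂ w) w (chiB c₂ r₂) *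
        kotheNorm n p (phiKS n lam₁ lam₂ w) w (chiB c₂ r₂) / V₂
        ≤ apConst n p (phiKS n lam₁ lam₂ w) w := by
      rw [apConst]
      refine le_iSup_of_le c₂ ?_
      refine le_iSup_of_le r₂ ?_
      exact le_iSup_of_le hr₂ le_rfl
    have h2 := (ENNReal.div_le_iff_le_mul (Or.inl hV₂0) (Or.inl hV₂t)).mp (hterm.trans hAp)
    exact h2.trans (mul_le_mul_left le_self_add _)
  set m : ℝ≥0∞ := (W₁ / phiKS n lam₁ lam₂ w c₁ r₁) ^ (1/p) with hmdef
  have master : m * (N₀⁻¹ * L) ≤ (A+1) * V₂ := (mul_le_mul' hMlow hKlow).trans hMK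
  have hφ₁ : phiKS n lam₁ lam₂ w c₁ r₁ = R₁ * W₁ ^ (lam₂/(n:ℝ)) := rfl
  have hφ₁0 : phiKS n lam₁ lam₂ w c₁ r₁ ≠ 0 := by
    rw [hφ₁]; exact mul_ne_zero hR₁0 (ENNReal.rpow_pos hW₁pos hW₁t).ne'
  have hφ₁t : phiKS n lam₁ lam₂ w c₁ r₁ ≠ ⊤ := by
    rw [hφ₁]; exact mul_ne_top hR₁t (rpow_ne_top'' hW₁0 hW₁t _)
  by_cases hzero : volume.restrict (ball c₂ r₂) {x | w x = 0} = 0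
  · -- main case : w is a.e. positive and finite on B₂
    have hposae : ∀ᵐ x ∂(volume.restrict (ball c₂ r₂)), w x ≠ 0 := by
      rw [ae_iff]; simpa using hzero
    have hfinae : ∀ᵐ x ∂(volume.restrict (ball c₂ r₂)), w x ≠ ⊤ := by
      filter_upwards [ae_lt_top hw (show (∫⁻ x in ball c₂ r₂, w x) ≠ ⊤ from hW₂t)] with x hx
      exact hx.ne
    have hrev := revAux (volume.restrict (ball c₂ r₂)) hw hfinae hposae hε
    rw [Measure.restrict_apply_univ] at hrev
    have hLlow : V₂ ^ ((1:ℝ)+ε) * W₂ ^ (-ε) ≤ L := by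
      have hh1 : V₂ ^ ((1:ℝ)+ε) ≤ W₂ ^ ε * L := by
        calc V₂ ^ ((1:ℝ)+ε)
            ≤ (W₂ ^ (ε/(1+ε)) * L ^ (1/(1+ε))) ^ ((1:ℝ)+ε) :=
              ENNReal.rpow_le_rpow hrev (by linarith)
          _ = W₂ ^ ε * L := by
              rw [ENNReal.mul_rpow_of_nonneg _ _ (by linarith),
                ← ENNReal.rpow_mul, ← ENNReal.rpow_mul,
                show (ε/(1+ε))*((1:ℝ)+ε) = ε by field_simp,
                show (1/(1+ε))*((1:ℝ)+ε) = 1 by field_simp,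
                ENNReal.rpow_one]
      calc V₂ ^ ((1:ℝ)+ε) * W₂ ^ (-ε) ≤ (W₂ ^ ε * L) * W₂ ^ (-ε) := mul_le_mul_left hh1 _
        _ = L * (W₂ ^ ε * W₂ ^ (-ε)) := by ring
        _ = L := by
            rw [← ENNReal.rpow_add _ _ hW₂0 hW₂t, add_neg_cancel, ENNReal.rpow_zero, mul_one]
    have master2 : m * (N₀⁻¹ * (V₂ ^ ((1:ℝ)+ε) * W₂ ^ (-ε))) ≤ (A+1) * V₂ :=
      le_trans (mul_le_mul_right (mul_le_mul_right hLlow _) _) master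
    -- isolate W₁
    set Y : ℝ≥0∞ := N₀⁻¹ * (V₂ ^ ((1:ℝ)+ε) * W₂ ^ (-ε)) with hYdef
    have hY0 : Y ≠ 0 := by
      rw [hYdef]
      exact mul_ne_zero (ENNReal.inv_ne_zero.mpr hN₀t)
        (mul_ne_zero (ENNReal.rpow_pos (pos_iff_ne_zero.mpr hV₂0) hV₂t).ne'
          (ENNReal.rpow_pos hW₂pos hW₂t).ne')
    have hYt : Y ≠ ⊤ := by
      rw [hYdef]
      exact mul_ne_top (ENNReal.inv_ne_top.mpr hN₀0)
        (mul_ne_top (rpow_ne_top'' hV₂0 hV₂t _) (rpow_ne_top'' hW₂0 hW₂t _))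
    set Z : ℝ≥0∞ := ((A+1) * V₂) / Y with hZdef
    have hmZ : m ≤ Z := (ENNReal.le_div_iff_mul_le (Or.inl hY0) (Or.inl hYt)).mpr master2
    have hmp : m ^ p = W₁ / phiKS n lam₁ lam₂ w c₁ r₁ := by
      rw [hmdef, ← ENNReal.rpow_mul, one_div_mul_cancel hp0.ne', ENNReal.rpow_one]
    have step2 : W₁ / phiKS n lam₁ lam₂ w c₁ r₁ ≤ Z ^ p :=
      hmp ▸ ENNReal.rpow_le_rpow hmZ hp0.le
    have step3 : W₁ ≤ Z ^ p * (R₁ * W₁ ^ (lam₂/(n:ℝ))) := by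
      have h := (ENNReal.div_le_iff_le_mul (Or.inl hφ₁0) (Or.inl hφ₁t)).mp step2
      rwa [hφ₁] at h
    have step4 : W₁ ^ s ≤ Z ^ p * R₁ := by
      have hsplit : W₁ ^ s = W₁ * W₁ ^ (-(lam₂/(n:ℝ))) := by
        rw [show s = 1 + -(lam₂/(n:ℝ)) by rw [hsdef]; field_simp <;> ring,
          ENNReal.rpow_add _ _ hW₁0 hW₁t, ENNReal.rpow_one]
      calc W₁ ^ s = W₁ * W₁ ^ (-(lam₂/(n:ℝ))) := hsplit
        _ ≤ (Z ^ p * (R₁ * W₁ ^ (lam₂/(n:ℝ)))) * W₁ ^ (-(lam₂/(n:ℝ))) :=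
            mul_le_mul_left step3 _
        _ = (Z ^ p * R₁) * (W₁ ^ (lam₂/(n:ℝ)) * W₁ ^ (-(lam₂/(n:ℝ)))) := by ring
        _ = Z ^ p * R₁ := by
            rw [← ENNReal.rpow_add _ _ hW₁0 hW₁t, add_neg_cancel, ENNReal.rpow_zero, mul_one]
    have step5 : W₁ ≤ (Z ^ p * R₁) ^ ((1:ℝ)/s) := by
      have hW : W₁ = (W₁ ^ s) ^ ((1:ℝ)/s) := by
        rw [← ENNReal.rpow_mul, mul_one_div_cancel hs0.ne', ENNReal.rpow_one]
      rw [hW]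
      exact ENNReal.rpow_le_rpow step4 (by positivity)
    -- final computation
    set δ : ℝ := lam₁ / ((n:ℝ) - lam₂) with hδdef
    have hδ0 : 0 < δ := by positivity
    have hYinv : Y⁻¹ = N₀ * (V₂ ^ (-((1:ℝ)+ε)) * W₂ ^ ε) := by
      rw [hYdef, ENNReal.mul_inv (Or.inl (ENNReal.inv_ne_zero.mpr hN₀t))
          (Or.inl (ENNReal.inv_ne_top.mpr hN₀0)), inv_inv,
        ENNReal.mul_inv (Or.inl (ENNReal.rpow_pos (pos_iff_ne_zero.mpr hV₂0) hV₂t).ne')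
          (Or.inl (rpow_ne_top'' hV₂0 hV₂t _)),
        ← ENNReal.rpow_neg, ← ENNReal.rpow_neg, neg_neg]
    have hZ : Z = (A+1) * N₀ * (V₂ ^ (-ε) * W₂ ^ ε) := by
      have hVc : V₂ * V₂ ^ (-((1:ℝ)+ε)) = V₂ ^ (-ε) := by
        rw [show V₂ * V₂ ^ (-((1:ℝ)+ε)) = V₂ ^ (1:ℝ) * V₂ ^ (-((1:ℝ)+ε)) by
            rw [ENNReal.rpow_one],
          ← ENNReal.rpow_add _ _ hV₂0 hV₂t]
        congr 1; ring
      calc Z = (A+1) * V₂ * Y⁻¹ := by rw [hZdef, div_eq_mul_inv]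
        _ = (A+1) * V₂ * (N₀ * (V₂ ^ (-((1:ℝ)+ε)) * W₂ ^ ε)) := by rw [hYinv]
        _ = (A+1) * N₀ * ((V₂ * V₂ ^ (-((1:ℝ)+ε))) * W₂ ^ ε) := by ring
        _ = (A+1) * N₀ * (V₂ ^ (-ε) * W₂ ^ ε) := by rw [hVc]
    have hps0 : 0 < p / s := by positivity
    have hRs : R₁ ^ ((1:ℝ)/s) = V₁ ^ δ * v ^ (-δ) := by
      have hv1 : V₁ ^ (lam₁/(n:ℝ)) = R₁ * v ^ (lam₁/(n:ℝ)) := by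
        rw [hV₁def, hR₁def]; exact hVpow c₁ r₁ hr₁
      have hR2 : R₁ = V₁ ^ (lam₁/(n:ℝ)) * v ^ (-(lam₁/(n:ℝ))) := by
        rw [hv1, mul_assoc, ← ENNReal.rpow_add _ _ hv0 hvt, add_neg_cancel,
          ENNReal.rpow_zero, mul_one]
      rw [hR2, ENNReal.mul_rpow_of_nonneg _ _ (by positivity),
        ← ENNReal.rpow_mul, ← ENNReal.rpow_mul,
        show (lam₁/(n:ℝ)) * ((1:ℝ)/s) = δ by
          rw [hsdef, hδdef]; field_simp <;> ring,
        show (-(lam₁/(n:ℝ))) * ((1:ℝ)/s) = -δ by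
          rw [hsdef, hδdef]; field_simp <;> ring]
    have hNps : N₀ ^ (p/s) = W₂ ^ (b/s) * v ^ δ := by
      rw [hN₀def, ENNReal.mul_rpow_of_nonneg _ _ hps0.le,
        ← ENNReal.rpow_mul, ← ENNReal.rpow_mul,
        show (b/p) * (p/s) = b/s by field_simp <;> ring,
        show (lam₁/((n:ℝ)*p)) * (p/s) = δ by
          rw [hsdef, hδdef]; field_simp <;> ring]
    have hXps : (V₂ ^ (-ε) * W₂ ^ ε) ^ (p/s) = V₂ ^ (-δ) * W₂ ^ δ := by
      rw [ENNReal.mul_rpow_of_nonneg _ _ hps0.le,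
        ← ENNReal.rpow_mul, ← ENNReal.rpow_mul,
        show (-ε) * (p/s) = -δ by
          rw [hεdef, hsdef, hδdef]; field_simp <;> ring,
        show ε * (p/s) = δ by
          rw [hεdef, hsdef, hδdef]; field_simp <;> ring]
    have hWc : W₂ ^ (b/s) * W₂ ^ δ = W₂ := by
      rw [← ENNReal.rpow_add _ _ hW₂0 hW₂t,
        show b/s + δ = 1 by rw [hbdef, hsdef, hδdef]; field_simp <;> ring,
        ENNReal.rpow_one]
    have hZps : Z ^ (p/s) = (A+1) ^ (p/s) * (W₂ * v ^ δ) * V₂ ^ (-δ) :=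
      calc Z ^ (p/s) = ((A+1) * N₀ * (V₂ ^ (-ε) * W₂ ^ ε)) ^ (p/s) := by rw [hZ]
        _ = ((A+1) * N₀) ^ (p/s) * (V₂ ^ (-ε) * W₂ ^ ε) ^ (p/s) :=
            ENNReal.mul_rpow_of_nonneg _ _ hps0.le
        _ = (A+1) ^ (p/s) * N₀ ^ (p/s) * (V₂ ^ (-ε) * W₂ ^ ε) ^ (p/s) := by
            rw [ENNReal.mul_rpow_of_nonneg (A+1) N₀ hps0.le]
        _ = (A+1) ^ (p/s) * (W₂ ^ (b/s) * v ^ δ) * (V₂ ^ (-δ) * W₂ ^ δ) := by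
            rw [hNps, hXps]
        _ = (A+1) ^ (p/s) * ((W₂ ^ (b/s) * W₂ ^ δ) * v ^ δ) * V₂ ^ (-δ) := by ring
        _ = (A+1) ^ (p/s) * (W₂ * v ^ δ) * V₂ ^ (-δ) := by rw [hWc]
    have hfinal : (Z ^ p * R₁) ^ ((1:ℝ)/s)
        = (A+1) ^ (p * n / ((n:ℝ) - lam₂)) * W₂ * (V₁/V₂) ^ δ := by
      rw [ENNReal.mul_rpow_of_nonneg _ _ (by positivity), ← ENNReal.rpow_mul,
        show p * ((1:ℝ)/s) = p/s by ring, hZps, hRs,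
        show p * (n:ℝ) / ((n:ℝ) - lam₂) = p/s by rw [hsdef]; field_simp,
        show (V₁/V₂) ^ δ = V₁ ^ δ * V₂ ^ (-δ) by
          rw [ENNReal.div_rpow_of_nonneg _ _ hδ0.le, ENNReal.rpow_neg, div_eq_mul_inv]]
      have hvc : v ^ δ * v ^ (-δ) = 1 := by
        rw [← ENNReal.rpow_add _ _ hv0 hvt, add_neg_cancel, ENNReal.rpow_zero]
      calc (A+1) ^ (p/s) * (W₂ * v ^ δ) * V₂ ^ (-δ) * (V₁ ^ δ * v ^ (-δ))
          = (A+1) ^ (p/s) * W₂ * (V₁ ^ δ * V₂ ^ (-δ)) * (v ^ δ * v ^ (-δ)) := by ring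
        _ = (A+1) ^ (p/s) * W₂ * (V₁ ^ δ * V₂ ^ (-δ)) := by rw [hvc, mul_one]
    rw [← hfinal]
    exact step5
  · -- degenerate case : w vanishes on a subset of B₂ of positive measure
    exfalso
    have hLtop : L = ⊤ := by
      have hle : (∫⁻ x in ball c₂ r₂, ({x | w x = 0}.indicator (fun _ => (⊤:ℝ≥0∞)) x)) ≤ L := by
        rw [hLdef]
        apply lintegral_mono
        intro x
        by_cases hx : w x = 0
        · simp [indicator, hx, ENNReal.zero_rpow_of_neg (neg_neg_of_pos hε)]
        · simp [indicator, hx]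
      have heq : (∫⁻ x in ball c₂ r₂, ({x | w x = 0}.indicator (fun _ => (⊤:ℝ≥0∞)) x)) = ⊤ := by
        rw [lintegral_indicator (s := {x | w x = 0}) (hw (measurableSet_singleton 0)), lintegral_const,
          Measure.restrict_apply_univ]
        exact ENNReal.top_mul hzero
      exact top_le_iff.mp (heq ▸ hle)
    have hmt : (A+1) * V₂ ≠ ⊤ := mul_ne_top hA't hV₂t
    have h1' : m * (N₀⁻¹ * ⊤) ≤ (A+1) * V₂ := hLtop ▸ master
    rw [ENNReal.mul_top (ENNReal.inv_ne_zero.mpr hN₀t)] at h1'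
    have hm0 : m = 0 := by
      by_contra hm0
      rw [ENNReal.mul_top hm0] at h1'
      exact hmt (top_le_iff.mp h1')
    rw [hmdef] at hm0
    rcases ENNReal.rpow_eq_zero_iff.mp hm0 with ⟨hdiv, _⟩ | ⟨_, hneg⟩
    · rcases ENNReal.div_eq_zero_iff.mp hdiv with h' | h'
      · exact hW₁0 h'
      · exact hφ₁t h'
    · have : (0:ℝ) < 1/p := by positivity
      linarith
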